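/- arXiv:2103.11876 — 2 statements merged into one kernel-verified Lean document; each statement's English description precedes it below -/
import Mathlib

section
/- Let s, t be positive integers and let b, c be non-negative integers with b ≠ c. Then Σ_{n=1}^∞ 1/((n+b)^s (n+c)^t) = Σ_{j=2}^s ((-1)^{s+j}/(c-b)^{t+s-j}) C(s+t-j-1, t-1) (ζ(j) - H_b^{(j)}) + Σ_{j=2}^t ((-1)^s/(c-b)^{t+s-j}) C(s+t-j-1, s-1) (ζ(j) - H_c^{(j)}) + ((-1)^s/(c-b)^{t+s-1}) C(s+t-2, s-1) (H_b - H_c). -/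
open Finset

/-- Generalized harmonic number `H_n^(r) = ∑_{k=1}^n 1/k^r`. -/
noncomputable def Hgen (r n : ℕ) : ℝ := ∑ k ∈ Finset.Icc 1 n, (1 : ℝ) / (k : ℝ) ^ r

/-- Hyperharmonic numbers of non-negative order: `hpos 0 n = 1/n`,
`hpos (r+1) n = ∑_{k=1}^n hpos r k`.  In particular `hpos 1 n = H_n`. -/
noncomputable def hpos : ℕ → ℕ → ℝ
  | 0, n => 1 / (n : ℝ)
  | r + 1, n => ∑ k ∈ Finset.Icc 1 n, hpos r k

/-- Hyperharmonic numbers of negative order: `hneg r n = h_n^(-r)` for `r ≥ 1`. -/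
noncomputable def hneg (r n : ℕ) : ℝ :=
  if r < n then (-1 : ℝ) ^ r / (((n - r : ℕ) : ℝ) * (Nat.choose n r : ℝ))
  else ∑ k ∈ Finset.range n, (Nat.choose r k : ℝ) * (-1 : ℝ) ^ k / ((n - k : ℕ) : ℝ)

/-- Hyperharmonic numbers of arbitrary integer order. -/
noncomputable def hh (r : ℤ) (n : ℕ) : ℝ :=
  if 0 ≤ r then hpos r.toNat n else hneg (-r).toNat n

/-- Riemann zeta value `ζ(k) = ∑_{n=1}^∞ 1/n^k`. -/
noncomputable def zetaVal (k : ℕ) : ℝ := ∑' n : ℕ, 1 / ((n : ℝ) + 1) ^ k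

/-- Linear Euler sum `ζ_{H^(s)}(t) = ∑_{n=1}^∞ H_n^(s)/n^t`. -/
noncomputable def eulerSum (s t : ℕ) : ℝ := ∑' n : ℕ, Hgen s (n + 1) / ((n : ℝ) + 1) ^ t

/-- The set of Riemann zeta values `ζ(k)`, `k ≥ 2`. -/
def zetaSet : Set ℝ := {x | ∃ k : ℕ, 2 ≤ k ∧ x = zetaVal k}

/-- The set of Riemann zeta values together with linear Euler sums. -/
def zetaEulerSet : Set ℝ :=
  zetaSet ∪ {x | ∃ s t : ℕ, 1 ≤ s ∧ 2 ≤ t ∧ x = eulerSum s t}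


lemma rec_id (u v w : ℝ) (hu : u ≠ 0) (hv : v ≠ 0) (hw : w ≠ 0) (hvu : v - u = w) (a b : ℕ) :
    1/(u^(a+1) * v^(b+1)) = 1/w * (1/(u^(a+1) * v^b) - 1/(u^a * v^(b+1))) := by
  subst hvu
  rw [pow_succ, pow_succ]
  field_simp

lemma pascalA (w u : ℝ) (hw : w ≠ 0) (hu : u ≠ 0) (p q : ℕ) :
    1/w * ((∑ k ∈ range (p+1+1), (-1:ℝ)^k * ((q+k).choose q : ℝ) / w^(q+1+k) / u^(p+1+1-k)) -
           (∑ k ∈ range (p+1), (-1:ℝ)^k * ((q+1+k).choose (q+1) : ℝ) / w^(q+1+1+k) / u^(p+1-k))) =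
    ∑ k ∈ range (p+1+1), (-1:ℝ)^k * ((q+1+k).choose (q+1) : ℝ) / w^(q+1+1+k) / u^(p+1+1-k) := by
  have h2 : (∑ k ∈ range (p+1), (-1:ℝ)^k * ((q+1+k).choose (q+1) : ℝ) / w^(q+1+1+k) / u^(p+1-k))
      = ∑ k ∈ range (p+1+1), (-1:ℝ)^(k+1) * ((q+k).choose (q+1) : ℝ) / w^(q+1+k) / u^(p+1+1-k) := by
    rw [Finset.sum_range_succ' (fun k => (-1:ℝ)^(k+1) * ((q+k).choose (q+1) : ℝ) / w^(q+1+k) / u^(p+1+1-k)) (p+1)]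
    simp [Nat.choose_succ_self]
    apply Finset.sum_congr rfl
    intro k hk
    ring
  rw [h2, ← Finset.sum_sub_distrib, Finset.mul_sum]
  apply Finset.sum_congr rfl
  intro k hk
  have pas : ((q+1+k).choose (q+1) : ℝ) = ((q+k).choose q : ℝ) + ((q+k).choose (q+1) : ℝ) := by
    have h : q+1+k = (q+k)+1 := by omega
    rw [h, Nat.choose_succ_succ]
    push_cast; ring
  rw [pas, show q+1+1+k = (q+1+k)+1 from by omega, pow_succ (w) (q+1+k), pow_succ (-1:ℝ) k]
  ring

lemma pascalB (w v : ℝ) (hw : w ≠ 0) (hv : v ≠ 0) (p q : ℕ) :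
    1/w * ((∑ k ∈ range (q+1), (-1:ℝ)^(p+1+1) * ((p+1+k).choose (p+1) : ℝ) / w^(p+1+1+k) / v^(q+1-k)) -
           (∑ k ∈ range (q+1+1), (-1:ℝ)^(p+1) * ((p+k).choose p : ℝ) / w^(p+1+k) / v^(q+1+1-k))) =
    ∑ k ∈ range (q+1+1), (-1:ℝ)^(p+1+1) * ((p+1+k).choose (p+1) : ℝ) / w^(p+1+1+k) / v^(q+1+1-k) := by
  have h1 : (∑ k ∈ range (q+1), (-1:ℝ)^(p+1+1) * ((p+1+k).choose (p+1) : ℝ) / w^(p+1+1+k) / v^(q+1-k))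
      = ∑ k ∈ range (q+1+1), (-1:ℝ)^(p+1+1) * ((p+k).choose (p+1) : ℝ) / w^(p+1+k) / v^(q+1+1-k) := by
    rw [Finset.sum_range_succ' (fun k => (-1:ℝ)^(p+1+1) * ((p+k).choose (p+1) : ℝ) / w^(p+1+k) / v^(q+1+1-k)) (q+1)]
    simp [Nat.choose_succ_self]
    apply Finset.sum_congr rfl
    intro k hk
    ring
  rw [h1, ← Finset.sum_sub_distrib, Finset.mul_sum]
  apply Finset.sum_congr rfl
  intro k hk
  have pas : ((p+1+k).choose (p+1) : ℝ) = ((p+k).choose p : ℝ) + ((p+k).choose (p+1) : ℝ) := by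
    have h : p+1+k = (p+k)+1 := by omega
    rw [h, Nat.choose_succ_succ]
    push_cast; ring
  rw [pas, show p+1+1+k = (p+1+k)+1 from by omega, pow_succ (w) (p+1+k), pow_succ (-1:ℝ) (p+1)]
  ring

lemma key (u v w : ℝ) (hu : u ≠ 0) (hv : v ≠ 0) (hw : w ≠ 0) (hvu : v - u = w) :
    ∀ p q : ℕ, 1/(u^(p+1) * v^(q+1)) =
      (∑ k ∈ range (p+1), (-1:ℝ)^k * ((q+k).choose q : ℝ) / w^(q+1+k) / u^(p+1-k)) +
      (∑ k ∈ range (q+1), (-1:ℝ)^(p+1) * ((p+k).choose p : ℝ) / w^(p+1+k) / v^(q+1-k)) := by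
  intro p
  induction p with
  | zero =>
    intro q
    induction q with
    | zero =>
      simp only [Finset.sum_range_one, Nat.add_zero, add_zero, Nat.choose_self, Nat.cast_one, zero_add]
      subst hvu
      field_simp
      ring
    | succ q ihq =>
      rw [rec_id u v w hu hv hw hvu 0 (q+1), ihq]
      have hBt : (∑ k ∈ range (q+1+1), (-1:ℝ)^(0+1) * ((0+k).choose 0 : ℝ) / w^(0+1+k) / v^(q+1+1-k))
          = (∑ k ∈ range (q+1), (-1:ℝ)^(0+1) * ((0+(k+1)).choose 0 : ℝ) / w^(0+1+(k+1)) / v^(q+1+1-(k+1)))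
            + (-1:ℝ)^(0+1) * ((0+0).choose 0 : ℝ) / w^(0+1+0) / v^(q+1+1-0) :=
        Finset.sum_range_succ' _ (q+1)
      have hB1 : 1/w * (∑ k ∈ range (q+1), (-1:ℝ)^(0+1) * ((0+k).choose 0 : ℝ) / w^(0+1+k) / v^(q+1-k))
          = (∑ k ∈ range (q+1), (-1:ℝ)^(0+1) * ((0+(k+1)).choose 0 : ℝ) / w^(0+1+(k+1)) / v^(q+1+1-(k+1))) := by
        rw [Finset.mul_sum]
        apply Finset.sum_congr rfl
        intro k hk
        have e3 : q+1+1-(k+1) = q+1-k := by omega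
        rw [e3]
        simp only [Nat.choose_zero_right, Nat.cast_one, zero_add]
        ring
      have hA1 : 1/w * ((∑ k ∈ range (0+1), (-1:ℝ)^k * ((q+k).choose q : ℝ) / w^(q+1+k) / u^(0+1-k)))
          = (∑ k ∈ range (0+1), (-1:ℝ)^k * ((q+1+k).choose (q+1) : ℝ) / w^(q+1+1+k) / u^(0+1-k)) := by
        simp
        ring
      have hTr : 1/w * (0 - 1/(u^0 * v^(q+1+1)))
          = (-1:ℝ)^(0+1) * ((0+0).choose 0 : ℝ) / w^(0+1+0) / v^(q+1+1-0) := by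
        simp only [Nat.choose_self, Nat.cast_one, pow_zero, one_mul, Nat.add_zero, add_zero, Nat.sub_zero]
        ring
      rw [hBt]
      linear_combination hA1 + hB1 + hTr
  | succ p ihp =>
    intro q
    induction q with
    | zero =>
      rw [rec_id u v w hu hv hw hvu (p+1) 0, ihp 0]
      have hAt : (∑ k ∈ range (p+1+1), (-1:ℝ)^k * ((0+k).choose 0 : ℝ) / w^(0+1+k) / u^(p+1+1-k))
          = (∑ k ∈ range (p+1), (-1:ℝ)^(k+1) * ((0+(k+1)).choose 0 : ℝ) / w^(0+1+(k+1)) / u^(p+1+1-(k+1)))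
            + (-1:ℝ)^0 * ((0+0).choose 0 : ℝ) / w^(0+1+0) / u^(p+1+1-0) :=
        Finset.sum_range_succ' _ (p+1)
      have hA2a : 1/w * (∑ k ∈ range (p+1), (-1:ℝ)^k * ((0+k).choose 0 : ℝ) / w^(0+1+k) / u^(p+1-k))
          = -(∑ k ∈ range (p+1), (-1:ℝ)^(k+1) * ((0+(k+1)).choose 0 : ℝ) / w^(0+1+(k+1)) / u^(p+1+1-(k+1))) := by
        rw [Finset.mul_sum, ← Finset.sum_neg_distrib]
        apply Finset.sum_congr rfl
        intro k hk
        have e3 : p+1+1-(k+1) = p+1-k := by omega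
        rw [e3]
        simp only [Nat.choose_zero_right, Nat.cast_one, zero_add]
        ring
      have hA2b : 1/w * (1/(u^(p+1+1) * v^0))
          = (-1:ℝ)^0 * ((0+0).choose 0 : ℝ) / w^(0+1+0) / u^(p+1+1-0) := by
        simp
        ring
      have hB : 1/w * (0 - (∑ k ∈ range (0+1), (-1:ℝ)^(p+1) * ((p+k).choose p : ℝ) / w^(p+1+k) / v^(0+1-k)))
          = (∑ k ∈ range (0+1), (-1:ℝ)^(p+1+1) * ((p+1+k).choose (p+1) : ℝ) / w^(p+1+1+k) / v^(0+1-k)) := by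
        simp only [zero_add, Finset.sum_range_one, Nat.add_zero, add_zero, Nat.choose_self, Nat.cast_one]
        rw [pow_succ (w) (p+1), pow_succ (-1:ℝ) (p+1)]
        ring
      rw [hAt]
      linear_combination -hA2a + hA2b + hB
    | succ q ihq =>
      rw [rec_id u v w hu hv hw hvu (p+1) (q+1), ihq, ihp (q+1)]
      linear_combination pascalA w u hw hu p q + pascalB w v hw hv p q

lemma Hgen_succ (r n : ℕ) : Hgen r (n+1) = Hgen r n + 1/((n:ℝ)+1)^r := by
  unfold Hgen
  rw [Finset.sum_Icc_succ_top (Nat.succ_le_succ (Nat.zero_le n))]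
  push_cast
  ring

lemma range_sum_eq_Hgen (r b : ℕ) : ∑ i ∈ range b, 1/((i:ℝ)+1)^r = Hgen r b := by
  induction b with
  | zero => simp [Hgen]
  | succ b ih => rw [Finset.sum_range_succ, ih, Hgen_succ]

lemma summable_inv_pow (j : ℕ) (hj : 2 ≤ j) : Summable (fun n : ℕ => 1/((n:ℝ)+1)^j) := by
  have h := Real.summable_one_div_nat_pow.mpr hj
  have h2 := (summable_nat_add_iff 1).mpr h
  exact h2.congr (fun n => by push_cast; ring)

lemma hasSum_shift (b j : ℕ) (hj : 2 ≤ j) :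
    HasSum (fun n : ℕ => 1/(((n+1+b : ℕ)):ℝ)^j) (zetaVal j - Hgen j b) := by
  have hs := summable_inv_pow j hj
  have H0 : HasSum (fun n : ℕ => 1/((n:ℝ)+1)^j) (zetaVal j) := hs.hasSum
  have H1 : HasSum (fun n : ℕ => 1/((((n+b : ℕ)) : ℝ)+1)^j) (zetaVal j - Hgen j b) := by
    exact (hasSum_nat_add_iff (f := fun n : ℕ => 1/((n:ℝ)+1)^j) b).mpr
      (by rw [range_sum_eq_Hgen j b]; simpa using H0)
  have hfun : (fun n : ℕ => 1/(((n+1+b : ℕ)):ℝ)^j) = (fun n : ℕ => 1/((((n+b : ℕ)) : ℝ)+1)^j) := by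
    funext n; push_cast; ring
  rw [hfun]
  exact H1

lemma partial_harm (b : ℕ) : ∀ N : ℕ, ∑ n ∈ range N, 1/(((n+1+b : ℕ)):ℝ) = Hgen 1 (N+b) - Hgen 1 b := by
  intro N
  induction N with
  | zero => simp
  | succ N ih =>
    rw [Finset.sum_range_succ, ih, show N+1+b = (N+b)+1 from by omega, Hgen_succ]
    push_cast
    ring

lemma Hgen_diff (r m n : ℕ) (h : m ≤ n) :
    Hgen r n - Hgen r m = ∑ k ∈ Icc (m+1) n, 1/(k:ℝ)^r := by
  unfold Hgen
  have h1 : Finset.Icc 1 n = Finset.Ioc 0 n := Finset.Icc_add_one_left_eq_Ioc 0 n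
  have h2 : Finset.Icc 1 m = Finset.Ioc 0 m := Finset.Icc_add_one_left_eq_Ioc 0 m
  have h3 : Finset.Icc (m+1) n = Finset.Ioc m n := Finset.Icc_add_one_left_eq_Ioc m n
  rw [h1, h2, h3, ← Finset.sum_Ioc_consecutive _ (Nat.zero_le m) h]
  ring

lemma hasSum_tel (b c : ℕ) (hlt : b < c) :
    HasSum (fun n : ℕ => 1/(((n+1+b : ℕ)):ℝ) - 1/(((n+1+c : ℕ)):ℝ)) (Hgen 1 c - Hgen 1 b) := by
  set f : ℕ → ℝ := fun n => 1/(((n+1+b : ℕ)):ℝ) - 1/(((n+1+c : ℕ)):ℝ) with hf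
  have hub : ∀ n : ℕ, (0:ℝ) < ((n+1+b : ℕ) : ℝ) := fun n => by positivity
  have huc : ∀ n : ℕ, (0:ℝ) < ((n+1+c : ℕ) : ℝ) := fun n => by positivity
  have hpos : ∀ n, 0 ≤ f n := by
    intro n
    simp only [hf, sub_nonneg]
    apply one_div_le_one_div_of_le (hub n)
    exact_mod_cast by omega
  have hbound : ∀ n : ℕ, f n ≤ (c:ℝ) * (1/((n:ℝ)+1)^2) := by
    intro n
    have h1 : f n = ((c:ℝ) - b)/(((n:ℝ)+1+b) * ((n:ℝ)+1+c)) := by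
      simp only [hf]
      push_cast
      rw [div_sub_div _ _ (by positivity) (by positivity)]
      push_cast
      field_simp
      try ring
    rw [h1, mul_one_div]
    apply div_le_div₀ (by positivity) (by simp) (by positivity)
    have e1 : (n:ℝ)+1 ≤ (n:ℝ)+1+b := by simp
    have e2 : (n:ℝ)+1 ≤ (n:ℝ)+1+c := by simp
    nlinarith [e1, e2]
  have hsum : Summable f :=
    Summable.of_nonneg_of_le hpos hbound ((summable_inv_pow 2 le_rfl).mul_left (c:ℝ))
  have htend := hsum.hasSum.tendsto_sum_nat
  have hS : ∀ N, ∑ n ∈ range N, f n = (Hgen 1 c - Hgen 1 b) - (Hgen 1 (N+c) - Hgen 1 (N+b)) := by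
    intro N
    simp only [hf]
    rw [Finset.sum_sub_distrib, partial_harm b N, partial_harm c N]
    ring
  have hD0 : ∀ N : ℕ, 0 ≤ Hgen 1 (N+c) - Hgen 1 (N+b) := by
    intro N
    rw [Hgen_diff 1 (N+b) (N+c) (by omega)]
    apply Finset.sum_nonneg
    intro k hk
    positivity
  have hDle : ∀ N : ℕ, Hgen 1 (N+c) - Hgen 1 (N+b) ≤ (c:ℝ) * (1/((N:ℝ)+1)) := by
    intro N
    rw [Hgen_diff 1 (N+b) (N+c) (by omega)]
    calc ∑ k ∈ Icc (N+b+1) (N+c), 1/(k:ℝ)^1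
        ≤ (Icc (N+b+1) (N+c)).card • (1/((N:ℝ)+1)) := by
          apply Finset.sum_le_card_nsmul
          intro k hk
          simp only [Finset.mem_Icc] at hk
          rw [pow_one]
          apply one_div_le_one_div_of_le (by positivity)
          exact_mod_cast by omega
      _ ≤ (c:ℝ) * (1/((N:ℝ)+1)) := by
          rw [nsmul_eq_mul, Nat.card_Icc]
          apply mul_le_mul_of_nonneg_right _ (by positivity)
          exact_mod_cast by omega
  have hDtend : Filter.Tendsto (fun N : ℕ => Hgen 1 (N+c) - Hgen 1 (N+b)) Filter.atTop (nhds 0) := by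
    apply squeeze_zero hD0 hDle
    have := tendsto_one_div_add_atTop_nhds_zero_nat.const_mul (c:ℝ)
    simpa using this
  have h2 : Filter.Tendsto (fun N => ∑ n ∈ range N, f n) Filter.atTop (nhds (Hgen 1 c - Hgen 1 b)) := by
    have h3 : Filter.Tendsto (fun N : ℕ => (Hgen 1 c - Hgen 1 b) - (Hgen 1 (N+c) - Hgen 1 (N+b)))
        Filter.atTop (nhds ((Hgen 1 c - Hgen 1 b) - 0)) := tendsto_const_nhds.sub hDtend
    rw [sub_zero] at h3
    exact (funext hS : _) ▸ h3
  have := tendsto_nhds_unique htend h2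
  exact this ▸ hsum.hasSum

lemma hasSum_tel' (b c : ℕ) (h : b ≠ c) :
    HasSum (fun n : ℕ => 1/(((n+1+c : ℕ)):ℝ) - 1/(((n+1+b : ℕ)):ℝ)) (Hgen 1 b - Hgen 1 c) := by
  rcases h.lt_or_gt with hlt | hlt
  · have := (hasSum_tel b c hlt).neg
    simpa [neg_sub] using this
  · exact hasSum_tel c b hlt

theorem stmt4 (s t : ℕ) (hs : 1 ≤ s) (ht : 1 ≤ t) (b c : ℕ) (hbc : b ≠ c) :
    ∑' n : ℕ, 1 / (((n + 1 + b : ℕ) : ℝ) ^ s * ((n + 1 + c : ℕ) : ℝ) ^ t) =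
      (∑ j ∈ Finset.Icc 2 s, (-1 : ℝ) ^ (s + j) / ((c : ℝ) - (b : ℝ)) ^ (t + s - j) *
        (Nat.choose (s + t - j - 1) (t - 1) : ℝ) * (zetaVal j - Hgen j b)) +
      (∑ j ∈ Finset.Icc 2 t, (-1 : ℝ) ^ s / ((c : ℝ) - (b : ℝ)) ^ (t + s - j) *
        (Nat.choose (s + t - j - 1) (s - 1) : ℝ) * (zetaVal j - Hgen j c)) +
      (-1 : ℝ) ^ s / ((c : ℝ) - (b : ℝ)) ^ (t + s - 1) *
        (Nat.choose (s + t - 2) (s - 1) : ℝ) * (Hgen 1 b - Hgen 1 c) := by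
  obtain ⟨p, rfl⟩ : ∃ p, s = p + 1 := ⟨s - 1, by omega⟩
  obtain ⟨q, rfl⟩ : ∃ q, t = q + 1 := ⟨t - 1, by omega⟩
  have hw : (c : ℝ) - (b : ℝ) ≠ 0 := sub_ne_zero_of_ne (by exact_mod_cast hbc.symm)
  set w : ℝ := (c : ℝ) - (b : ℝ) with hwdef
  have hkey : ∀ n : ℕ,
      1 / (((n + 1 + b : ℕ) : ℝ) ^ (p+1) * ((n + 1 + c : ℕ) : ℝ) ^ (q+1)) =
      ((∑ k ∈ range p, ((-1:ℝ)^k * ((q+k).choose q : ℝ) / w^(q+1+k)) * (1/(((n+1+b : ℕ)):ℝ)^(p+1-k)))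
       + (∑ k ∈ range q, ((-1:ℝ)^(p+1) * ((p+k).choose p : ℝ) / w^(p+1+k)) * (1/(((n+1+c : ℕ)):ℝ)^(q+1-k))))
      + ((-1:ℝ)^(p+1) * ((p+q).choose p : ℝ) / w^(p+1+q)) *
          (1/(((n+1+c : ℕ)):ℝ) - 1/(((n+1+b : ℕ)):ℝ)) := by
    intro n
    have hu : ((n+1+b:ℕ):ℝ) ≠ 0 := by positivity
    have hv : ((n+1+c:ℕ):ℝ) ≠ 0 := by positivity
    have hvu : ((n+1+c:ℕ):ℝ) - ((n+1+b:ℕ):ℝ) = w := by rw [hwdef]; push_cast; ring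
    rw [key ((n+1+b:ℕ):ℝ) ((n+1+c:ℕ):ℝ) w hu hv hw hvu p q,
      Finset.sum_range_succ, Finset.sum_range_succ]
    have hcs : ((q+p).choose q : ℝ) = ((p+q).choose p : ℝ) := by
      rw [show q+p = p+q from by omega]
      exact_mod_cast congrArg Nat.cast (Nat.choose_symm_add (a := p) (b := q)).symm
    rw [show p+1-p = 1 from by omega, show q+1-q = 1 from by omega, pow_one, pow_one, hcs]
    have eA : ∀ k ∈ range p,
        (-1:ℝ)^k * ((q+k).choose q : ℝ) / w^(q+1+k) / ((n+1+b:ℕ):ℝ)^(p+1-k)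
        = ((-1:ℝ)^k * ((q+k).choose q : ℝ) / w^(q+1+k)) * (1/(((n+1+b : ℕ)):ℝ)^(p+1-k)) := by
      intro k hk; ring
    have eB : ∀ k ∈ range q,
        (-1:ℝ)^(p+1) * ((p+k).choose p : ℝ) / w^(p+1+k) / ((n+1+c:ℕ):ℝ)^(q+1-k)
        = ((-1:ℝ)^(p+1) * ((p+k).choose p : ℝ) / w^(p+1+k)) * (1/(((n+1+c : ℕ)):ℝ)^(q+1-k)) := by
      intro k hk; ring
    rw [Finset.sum_congr rfl eA, Finset.sum_congr rfl eB]
    ring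
  have HB : HasSum
      (fun n : ℕ => ∑ k ∈ range p, ((-1:ℝ)^k * ((q+k).choose q : ℝ) / w^(q+1+k)) * (1/(((n+1+b : ℕ)):ℝ)^(p+1-k)))
      (∑ k ∈ range p, ((-1:ℝ)^k * ((q+k).choose q : ℝ) / w^(q+1+k)) * (zetaVal (p+1-k) - Hgen (p+1-k) b)) := by
    apply hasSum_sum
    intro k hk
    simp only [Finset.mem_range] at hk
    exact (hasSum_shift b (p+1-k) (by omega)).mul_left _
  have HC : HasSum
      (fun n : ℕ => ∑ k ∈ range q, ((-1:ℝ)^(p+1) * ((p+k).choose p : ℝ) / w^(p+1+k)) * (1/(((n+1+c : ℕ)):ℝ)^(q+1-k)))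
      (∑ k ∈ range q, ((-1:ℝ)^(p+1) * ((p+k).choose p : ℝ) / w^(p+1+k)) * (zetaVal (q+1-k) - Hgen (q+1-k) c)) := by
    apply hasSum_sum
    intro k hk
    simp only [Finset.mem_range] at hk
    exact (hasSum_shift c (q+1-k) (by omega)).mul_left _
  have HT := (hasSum_tel' b c hbc).mul_left ((-1:ℝ)^(p+1) * ((p+q).choose p : ℝ) / w^(p+1+q))
  have Htot := (HB.add HC).add HT
  calc ∑' n : ℕ, 1 / (((n + 1 + b : ℕ) : ℝ) ^ (p+1) * ((n + 1 + c : ℕ) : ℝ) ^ (q+1))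
      = ∑' n : ℕ,
        (((∑ k ∈ range p, ((-1:ℝ)^k * ((q+k).choose q : ℝ) / w^(q+1+k)) * (1/(((n+1+b : ℕ)):ℝ)^(p+1-k)))
         + (∑ k ∈ range q, ((-1:ℝ)^(p+1) * ((p+k).choose p : ℝ) / w^(p+1+k)) * (1/(((n+1+c : ℕ)):ℝ)^(q+1-k))))
        + ((-1:ℝ)^(p+1) * ((p+q).choose p : ℝ) / w^(p+1+q)) *
            (1/(((n+1+c : ℕ)):ℝ) - 1/(((n+1+b : ℕ)):ℝ))) := tsum_congr hkey
    _ = ((∑ k ∈ range p, ((-1:ℝ)^k * ((q+k).choose q : ℝ) / w^(q+1+k)) * (zetaVal (p+1-k) - Hgen (p+1-k) b))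
         + (∑ k ∈ range q, ((-1:ℝ)^(p+1) * ((p+k).choose p : ℝ) / w^(p+1+k)) * (zetaVal (q+1-k) - Hgen (q+1-k) c)))
        + ((-1:ℝ)^(p+1) * ((p+q).choose p : ℝ) / w^(p+1+q)) * (Hgen 1 b - Hgen 1 c) := Htot.tsum_eq
    _ = _ := by
        have E1 : (∑ j ∈ Finset.Icc 2 (p+1), (-1 : ℝ) ^ (p+1+j) / w ^ (q+1+(p+1)-j) *
              (Nat.choose ((p+1)+(q+1)-j-1) ((q+1)-1) : ℝ) * (zetaVal j - Hgen j b))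
            = ∑ k ∈ range p, ((-1:ℝ)^k * ((q+k).choose q : ℝ) / w^(q+1+k)) * (zetaVal (p+1-k) - Hgen (p+1-k) b) := by
          apply Finset.sum_nbij' (i := fun j => p+1-j) (j := fun k => p+1-k)
          · intro a ha; simp only [Finset.mem_Icc] at ha; simp only [Finset.mem_range]; omega
          · intro a ha; simp only [Finset.mem_range] at ha; simp only [Finset.mem_Icc]; omega
          · intro a ha; simp only [Finset.mem_Icc] at ha; omega
          · intro a ha; simp only [Finset.mem_range] at ha; omega
          · intro a ha
            simp only [Finset.mem_Icc] at ha
            rw [show (q+1)-1 = q from by omega,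
              show (p+1)+(q+1)-a-1 = q+(p+1-a) from by omega,
              show q+1+(p+1)-a = q+1+(p+1-a) from by omega,
              show p+1-(p+1-a) = a from by omega,
              show (-1:ℝ)^(p+1+a) = (-1:ℝ)^(p+1-a) from by
                rw [show p+1+a = (p+1-a) + 2*a from by omega, pow_add, pow_mul]; norm_num]
            ring
        have E2 : (∑ j ∈ Finset.Icc 2 (q+1), (-1 : ℝ) ^ (p+1) / w ^ (q+1+(p+1)-j) *
              (Nat.choose ((p+1)+(q+1)-j-1) ((p+1)-1) : ℝ) * (zetaVal j - Hgen j c))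
            = ∑ k ∈ range q, ((-1:ℝ)^(p+1) * ((p+k).choose p : ℝ) / w^(p+1+k)) * (zetaVal (q+1-k) - Hgen (q+1-k) c) := by
          apply Finset.sum_nbij' (i := fun j => q+1-j) (j := fun k => q+1-k)
          · intro a ha; simp only [Finset.mem_Icc] at ha; simp only [Finset.mem_range]; omega
          · intro a ha; simp only [Finset.mem_range] at ha; simp only [Finset.mem_Icc]; omega
          · intro a ha; simp only [Finset.mem_Icc] at ha; omega
          · intro a ha; simp only [Finset.mem_range] at ha; omega
          · intro a ha
            simp only [Finset.mem_Icc] at ha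
            rw [show (p+1)-1 = p from by omega,
              show (p+1)+(q+1)-a-1 = p+(q+1-a) from by omega,
              show q+1+(p+1)-a = p+1+(q+1-a) from by omega,
              show q+1-(q+1-a) = a from by omega]
            ring
        rw [← E1, ← E2,
          show (q+1)+(p+1)-1 = p+1+q from by omega,
          show (p+1)+(q+1)-2 = p+q from by omega,
          show (p+1)-1 = p from by omega]
        ring
end

section
/- Let p, r be positive integers and l a non-negative integer. Then Σ_{n=1}^∞ h_n^{(-r)}/(n^p C(n+l,l)) = ζ(p+1) - H_r^{(p+1)} + Σ_{n=1}^r 1/(n^{p+1} C(n+l,l)) + Σ_{k=1}^{r-1} Σ_{n=1}^{r-k} C(r,k) (-1)^k / (n (n+k)^p C(n+k+l, l)) + ((-1)^r / C(r+l,l)) Σ_{a=0, a≠r}^{r+l} C(r+l, a) (-1)^a { (H_r - H_a)/(r-a)^p + Σ_{j=2}^p (H_r^{(j)} - ζ(j)) / (r-a)^{p-j+1} }. -/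
open Finset

lemma summ_base (k : ℕ) (hk : 2 ≤ k) : Summable (fun m : ℕ => 1 / ((m : ℝ) + 1) ^ k) := by
  have h : Summable (fun n : ℕ => 1 / (n : ℝ) ^ k) := Real.summable_one_div_nat_pow.2 hk
  have := (summable_nat_add_iff 1).2 h
  simpa using this

lemma summ_shift (k c : ℕ) (hk : 2 ≤ k) :
    Summable (fun m : ℕ => 1 / ((m : ℝ) + 1 + c) ^ k) := by
  refine Summable.of_nonneg_of_le (fun m => by positivity) (fun m => ?_) (summ_base k hk)
  have h1 : (0:ℝ) < (m:ℝ) + 1 := by positivity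
  have h2 : (m:ℝ) + 1 ≤ (m:ℝ) + 1 + c := by
    have : (0:ℝ) ≤ (c:ℝ) := Nat.cast_nonneg c
    linarith
  exact one_div_le_one_div_of_le (by positivity) (pow_le_pow_left₀ (by positivity) h2 k)

lemma Hgen_eq_range (k n : ℕ) : Hgen k n = ∑ i ∈ Finset.range n, 1 / ((i : ℝ) + 1) ^ k := by
  rw [Hgen]
  rw [Finset.range_eq_Ico, ← Finset.Ico_add_one_right_eq_Icc]  -- Icc 1 n = Ico 1 (n+1)
  rw [Finset.sum_Ico_eq_sum_range]
  simp [add_comm]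

lemma tsum_tail (k c : ℕ) (hk : 2 ≤ k) :
    ∑' m : ℕ, 1 / ((m : ℝ) + 1 + c) ^ k = zetaVal k - Hgen k c := by
  have hs := summ_base k hk
  have h := Summable.sum_add_tsum_nat_add (f := fun m : ℕ => 1 / ((m : ℝ) + 1) ^ k) c hs
  have h2 : (∑' m : ℕ, 1 / ((m + c : ℕ) + 1 : ℝ) ^ k) = ∑' m : ℕ, 1 / ((m : ℝ) + 1 + c) ^ k := by
    apply tsum_congr; intro m; push_cast; ring_nf
  rw [zetaVal, ← h, Hgen_eq_range]
  have h3 : (∑' m : ℕ, 1 / ((m + c : ℕ) + 1 : ℝ) ^ k) = ∑' m : ℕ, 1 / ((m : ℝ) + 1 + c) ^ k := by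
    apply tsum_congr; intro m; push_cast; ring_nf
  rw [← h3]
  push_cast
  ring

lemma summ_telescope (a b : ℕ) :
    Summable (fun m : ℕ => 1 / ((m : ℝ) + 1 + a) - 1 / ((m : ℝ) + 1 + b)) := by
  apply Summable.of_norm
  refine Summable.of_nonneg_of_le (fun m => norm_nonneg _) (fun m => ?_)
    ((summ_base 2 le_rfl).mul_left |(b : ℝ) - a|)
  have hA : (0:ℝ) < (m:ℝ) + 1 + a := by positivity
  have hB : (0:ℝ) < (m:ℝ) + 1 + b := by positivity
  have heq : 1 / ((m : ℝ) + 1 + a) - 1 / ((m : ℝ) + 1 + b)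
      = ((b:ℝ) - a) / (((m:ℝ)+1+a) * ((m:ℝ)+1+b)) := by
    field_simp
    ring
  rw [heq, Real.norm_eq_abs, abs_div, abs_of_pos (mul_pos hA hB), mul_one_div]
  have h1 : ((m:ℝ)+1)^2 ≤ ((m:ℝ)+1+a) * ((m:ℝ)+1+b) := by
    have ha : (0:ℝ) ≤ a := Nat.cast_nonneg a
    have hb : (0:ℝ) ≤ b := Nat.cast_nonneg b
    nlinarith [Nat.cast_nonneg (α := ℝ) m]
  have h2 : (0:ℝ) < ((m:ℝ)+1)^2 := by positivity
  gcongr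

lemma tsum_telescope_le (a b : ℕ) (hab : a ≤ b) :
    ∑' m : ℕ, (1 / ((m : ℝ) + 1 + a) - 1 / ((m : ℝ) + 1 + b)) = Hgen 1 b - Hgen 1 a := by
  set d := b - a with hd
  set g : ℕ → ℝ := fun i => 1 / ((i : ℝ) + 1 + a) with hg
  have hadd : a + d = b := by omega
  have haddR : (a : ℝ) + d = b := by exact_mod_cast hadd
  have hfg : ∀ m : ℕ, 1 / ((m : ℝ) + 1 + a) - 1 / ((m : ℝ) + 1 + b) = g m - g (m + d) := by
    intro m
    have h1 : ((m + d : ℕ) : ℝ) + 1 + a = (m : ℝ) + 1 + b := by push_cast; linarith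
    simp only [hg, h1]
  have hval : Hgen 1 b - Hgen 1 a = ∑ i ∈ Finset.range d, g i := by
    rw [Hgen_eq_range, Hgen_eq_range]
    have hb : b = a + d := hadd.symm
    rw [hb, Finset.sum_range_add]
    simp only [hg, pow_one]
    rw [add_sub_cancel_left]
    exact Finset.sum_congr rfl fun i _ => by push_cast; ring_nf
  have hsum : HasSum (fun m : ℕ => 1 / ((m : ℝ) + 1 + a) - 1 / ((m : ℝ) + 1 + b))
      (∑ i ∈ Finset.range d, g i) := by
    rw [(summ_telescope a b).hasSum_iff_tendsto_nat]
    have hP : ∀ n : ℕ, ∑ i ∈ Finset.range n, (1 / ((i : ℝ) + 1 + a) - 1 / ((i : ℝ) + 1 + b))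
        = ∑ i ∈ Finset.range d, g i - ∑ i ∈ Finset.Ico n (n + d), g i := by
      intro n
      have e1 : ∑ i ∈ Finset.range n, (1 / ((i : ℝ) + 1 + a) - 1 / ((i : ℝ) + 1 + b))
          = ∑ i ∈ Finset.range n, g i - ∑ i ∈ Finset.range n, g (i + d) := by
        rw [← Finset.sum_sub_distrib]
        exact Finset.sum_congr rfl fun i _ => hfg i
      have e2 : ∑ i ∈ Finset.range (d + n), g i =
          ∑ i ∈ Finset.range d, g i + ∑ i ∈ Finset.range n, g (i + d) := by
        rw [Finset.sum_range_add]
        congr 1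
        exact Finset.sum_congr rfl fun i _ => by rw [add_comm d i]
      have e3 : ∑ i ∈ Finset.Ico n (n + d), g i
          = ∑ i ∈ Finset.range (n + d), g i - ∑ i ∈ Finset.range n, g i :=
        Finset.sum_Ico_eq_sub g (Nat.le_add_right n d)
      rw [e1, e3, add_comm n d, e2]
      ring
    simp only [hP]
    have herr : Filter.Tendsto (fun n : ℕ => ∑ i ∈ Finset.Ico n (n + d), g i)
        Filter.atTop (nhds 0) := by
      apply squeeze_zero (g := fun n : ℕ => d * (1 / ((n : ℝ) + 1)))
        (fun n => Finset.sum_nonneg fun i _ => by simp only [hg]; positivity)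
      · intro n
        calc ∑ i ∈ Finset.Ico n (n + d), g i
            ≤ ∑ _i ∈ Finset.Ico n (n + d), 1 / ((n : ℝ) + 1) := by
              apply Finset.sum_le_sum
              intro i hi
              simp only [Finset.mem_Ico] at hi
              have h2 : (n : ℝ) + 1 ≤ (i : ℝ) + 1 + a := by
                have h3 : (n:ℝ) ≤ i := by exact_mod_cast hi.1
                have h4 := Nat.cast_nonneg (α := ℝ) a
                linarith
              simp only [hg]
              exact one_div_le_one_div_of_le (by positivity) h2
          _ = d * (1 / ((n : ℝ) + 1)) := by
              rw [Finset.sum_const, Nat.card_Ico]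
              simp [nsmul_eq_mul]
      · simpa using tendsto_one_div_add_atTop_nhds_zero_nat.const_mul (d : ℝ)
    have hfin := (tendsto_const_nhds
      (x := ∑ i ∈ Finset.range d, g i) (f := Filter.atTop (α := ℕ))).sub herr
    simpa using hfin
  rw [hsum.tsum_eq, hval]

lemma tsum_telescope (a b : ℕ) :
    ∑' m : ℕ, (1 / ((m : ℝ) + 1 + a) - 1 / ((m : ℝ) + 1 + b)) = Hgen 1 b - Hgen 1 a := by
  rcases le_total a b with h | h
  · exact tsum_telescope_le a b h
  · have := tsum_telescope_le b a h
    have hneg : ∀ m : ℕ, 1 / ((m : ℝ) + 1 + a) - 1 / ((m : ℝ) + 1 + b)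
        = -(1 / ((m : ℝ) + 1 + b) - 1 / ((m : ℝ) + 1 + a)) := fun m => by ring
    rw [tsum_congr hneg, tsum_neg, this]
    ring

lemma pf_p (x d : ℝ) (hx : x ≠ 0) (hd : d ≠ 0) (hxd : x + d ≠ 0) :
    ∀ p : ℕ, 1 ≤ p →
    1/(x*(x+d)^p) = (1/d^p)/x - ∑ j ∈ Finset.Icc 1 p, 1/(d^(p-j+1)*(x+d)^j) := by
  intro p hp
  induction p, hp using Nat.le_induction with
  | base =>
    rw [Finset.Icc_self, Finset.sum_singleton]
    norm_num
    field_simp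
    ring
  | succ p hp ih =>
    have hpow : (x+d)^p ≠ 0 := pow_ne_zero _ hxd
    have hpow1 : (x+d)^(p+1) ≠ 0 := pow_ne_zero _ hxd
    have key : 1/(x*(x+d)^(p+1)) = (1/d)*(1/(x*(x+d)^p)) - (1/d)*(1/(x+d)^(p+1)) := by
      field_simp
      ring
    rw [key, ih, Finset.sum_Icc_succ_top (by omega : 1 ≤ p+1)]
    have hstep : ∀ j ∈ Finset.Icc 1 p,
        1/(d^(p+1-j+1)*(x+d)^j) = (1/d)*(1/(d^(p-j+1)*(x+d)^j)) := by
      intro j hj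
      simp only [Finset.mem_Icc] at hj
      have h5 : p+1-j+1 = (p-j+1)+1 := by omega
      rw [h5, pow_succ]
      have : d ^ (p - j + 1) ≠ 0 := pow_ne_zero _ hd
      have : (x+d)^j ≠ 0 := pow_ne_zero _ hxd
      field_simp
    rw [Finset.sum_congr rfl hstep]
    have h6 : p+1-(p+1)+1 = 1 := by omega
    rw [h6, mul_sub, Finset.mul_sum]
    have hdp : d ^ p ≠ 0 := pow_ne_zero _ hd
    field_simp
    ring

lemma pf_a (s : ℕ) : ∀ (x : ℝ), 0 < x →
    ∑ a ∈ Finset.range (s+1), (-1:ℝ)^a * (Nat.choose s a : ℝ) / (x + a)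
      = (Nat.factorial s : ℝ) / ∏ j ∈ Finset.range (s+1), (x + j) := by
  induction s with
  | zero => intro x hx; simp
  | succ s ih =>
    intro x hx
    have hx1 : (0:ℝ) < x + 1 := by linarith
    have hsplit : ∑ a ∈ Finset.range (s+2), (-1:ℝ)^a * (Nat.choose (s+1) a : ℝ) / (x + a)
        = (∑ a ∈ Finset.range (s+1), (-1:ℝ)^a * (Nat.choose s a : ℝ) / (x + a))
          - ∑ a ∈ Finset.range (s+1), (-1:ℝ)^a * (Nat.choose s a : ℝ) / ((x+1) + a) := by
      rw [Finset.sum_range_succ' (fun a => (-1:ℝ)^a * (Nat.choose (s+1) a : ℝ) / (x + a)) (s+1)]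
      have e1 : ∀ b ∈ Finset.range (s+1),
          (-1:ℝ)^(b+1) * (Nat.choose (s+1) (b+1) : ℝ) / (x + (b+1:ℕ))
          = (-1:ℝ)^(b+1) * (Nat.choose s (b+1) : ℝ) / (x + ((b+1:ℕ):ℝ))
            - (-1:ℝ)^b * (Nat.choose s b : ℝ) / ((x+1) + b) := by
        intro b _
        rw [Nat.choose_succ_succ']
        push_cast
        rw [pow_succ]
        have h0 : x + ((b:ℝ)+1) ≠ 0 := by positivity
        have h0' : (x+1) + (b:ℝ) ≠ 0 := by positivity
        field_simp
        ring
      rw [Finset.sum_congr rfl e1, Finset.sum_sub_distrib]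
      have e2 : (∑ b ∈ Finset.range (s+1),
          (-1:ℝ)^(b+1) * (Nat.choose s (b+1) : ℝ) / (x + ((b+1:ℕ):ℝ)))
          + (-1:ℝ)^0 * (Nat.choose (s+1) 0 : ℝ) / (x + (0:ℕ))
          = ∑ a ∈ Finset.range (s+1), (-1:ℝ)^a * (Nat.choose s a : ℝ) / (x + a) := by
        rw [Finset.sum_range_succ' (fun a => (-1:ℝ)^a * (Nat.choose s a : ℝ) / (x + a)) s]
        rw [Finset.sum_range_succ]
        simp [Nat.choose_succ_self]
      rw [← e2]
      ring
    rw [hsplit, ih x hx, ih (x+1) hx1]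
    set P : ℝ := ∏ j ∈ Finset.range (s+1), (x + j) with hP
    set Q : ℝ := ∏ j ∈ Finset.range (s+1), ((x+1) + j) with hQ
    have hPpos : 0 < P := Finset.prod_pos fun j _ => by positivity
    have hQpos : 0 < Q := Finset.prod_pos fun j _ => by positivity
    have hR1 : ∏ j ∈ Finset.range (s+2), (x + j) = P * (x + (s+1:ℕ)) := by
      rw [Finset.prod_range_succ]
    have hR2 : ∏ j ∈ Finset.range (s+2), (x + j) = x * Q := by
      rw [Finset.prod_range_succ' (fun j => x + (j:ℝ)) (s+1)]
      have hc : ∀ j ∈ Finset.range (s+1), (x + ((j+1:ℕ):ℝ)) = (x+1) + (j:ℝ) :=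
        fun j _ => by push_cast; ring
      rw [Finset.prod_congr rfl hc]
      rw [hQ]
      norm_num
      ring
    have hxne : x ≠ 0 := ne_of_gt hx
    have hQP : Q = P * (x + (s+1:ℕ)) / x := by
      rw [eq_div_iff hxne, ← hR1, hR2]; ring
    rw [hR1, hQP]
    have hxs : x + ((s+1:ℕ):ℝ) ≠ 0 := by positivity
    rw [Nat.factorial_succ]
    push_cast
    field_simp
    ring

lemma prod_shift_factorial (m : ℕ) : ∀ s : ℕ,
    (Nat.factorial m : ℝ) * ∏ j ∈ Finset.range (s+1), ((m:ℝ)+1+j)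
      = (Nat.factorial (m+1+s) : ℝ) := by
  intro s
  induction s with
  | zero =>
    simp [Nat.factorial_succ]
    push_cast
    ring
  | succ s ih =>
    rw [Finset.prod_range_succ, show m+1+(s+1) = (m+1+s)+1 from rfl, Nat.factorial_succ]
    push_cast at ih ⊢
    nlinarith [ih]

lemma choose_prod_eq (m r l : ℕ) :
    1/(((m:ℝ)+1) * (Nat.choose (m+1+r) r : ℝ) * (Nat.choose (m+1+r+l) l : ℝ))
      = (1/(Nat.choose (r+l) l : ℝ)) *
        ((Nat.factorial (r+l) : ℝ) / ∏ j ∈ Finset.range (r+l+1), ((m:ℝ)+1+j)) := by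
  have h1 := Nat.cast_choose ℝ (show r ≤ m+1+r by omega)
  have h2 := Nat.cast_choose ℝ (show l ≤ m+1+r+l by omega)
  have h3 := Nat.cast_choose ℝ (show l ≤ r+l by omega)
  have hs1 : m+1+r-r = m+1 := by omega
  have hs2 : m+1+r+l-l = m+1+r := by omega
  have hs3 : r+l-l = r := by omega
  rw [hs1] at h1; rw [hs2] at h2; rw [hs3] at h3
  rw [show m+1+r+l = m+1+(r+l) by omega]
  rw [show m+1+r+l = m+1+(r+l) by omega] at h2
  have hprod := prod_shift_factorial m (r+l)
  have hmf : (Nat.factorial m : ℝ) ≠ 0 := by positivity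
  have hprod' : ∏ j ∈ Finset.range (r+l+1), ((m:ℝ)+1+j)
      = (Nat.factorial (m+1+(r+l)) : ℝ) / (Nat.factorial m : ℝ) := by
    rw [eq_div_iff hmf, mul_comm]; exact hprod
  rw [h1, h2, h3, hprod']
  have hfacm1 : (Nat.factorial (m+1) : ℝ) = ((m:ℝ)+1) * (Nat.factorial m : ℝ) := by
    rw [Nat.factorial_succ]; push_cast; ring
  rw [hfacm1]
  have n1 : (Nat.factorial (m+1+r) : ℝ) ≠ 0 := by positivity
  have n2 : (Nat.factorial (m+1+(r+l)) : ℝ) ≠ 0 := by positivity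
  have n3 : (Nat.factorial r : ℝ) ≠ 0 := by positivity
  have n4 : (Nat.factorial l : ℝ) ≠ 0 := by positivity
  have n5 : (Nat.factorial (r+l) : ℝ) ≠ 0 := by positivity
  have n6 : ((m:ℝ)+1) ≠ 0 := by positivity
  field_simp

lemma summ_frac (a c p : ℕ) (hp : 1 ≤ p) :
    Summable (fun m : ℕ => 1/(((m:ℝ)+1+a)*((m:ℝ)+1+c)^p)) := by
  refine Summable.of_nonneg_of_le (fun m => by positivity) (fun m => ?_) (summ_base 2 le_rfl)
  have hm : (1:ℝ) ≤ (m:ℝ)+1 := by have := Nat.cast_nonneg (α := ℝ) m; linarith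
  have ha : ((m:ℝ)+1) ≤ (m:ℝ)+1+a := by have := Nat.cast_nonneg (α := ℝ) a; linarith
  have hc : ((m:ℝ)+1) ≤ (m:ℝ)+1+c := by have := Nat.cast_nonneg (α := ℝ) c; linarith
  have hpow : ((m:ℝ)+1) ≤ ((m:ℝ)+1+c)^p :=
    calc ((m:ℝ)+1) = ((m:ℝ)+1)^1 := (pow_one _).symm
      _ ≤ ((m:ℝ)+1+c)^1 := by rw [pow_one, pow_one]; exact hc
      _ ≤ ((m:ℝ)+1+c)^p := pow_le_pow_right₀ (by linarith) hp
  have h1 : ((m:ℝ)+1)^2 ≤ ((m:ℝ)+1+a)*((m:ℝ)+1+c)^p := by nlinarith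
  exact one_div_le_one_div_of_le (by positivity) h1

lemma tsum_term_eq (p r : ℕ) (hp : 1 ≤ p) :
    ∑' m : ℕ, 1/(((m:ℝ)+1+r)*((m:ℝ)+1+r)^p) = zetaVal (p+1) - Hgen (p+1) r := by
  rw [← tsum_tail (p+1) r (by omega)]
  exact tsum_congr fun m => by rw [pow_succ']

lemma tsum_term_ne (p r a : ℕ) (hp : 1 ≤ p) (ha : a ≠ r) :
    ∑' m : ℕ, 1/(((m:ℝ)+1+a)*((m:ℝ)+1+r)^p)
      = (Hgen 1 r - Hgen 1 a)/((r:ℝ)-a)^p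
        + ∑ j ∈ Finset.Icc 2 p, (Hgen j r - zetaVal j)/((r:ℝ)-a)^(p-j+1) := by
  set d : ℝ := (r:ℝ) - a with hd
  have hdne : d ≠ 0 := by
    rw [hd, sub_ne_zero]
    exact fun h => ha (Nat.cast_injective h.symm)
  have hpt : ∀ m : ℕ, 1/(((m:ℝ)+1+a)*((m:ℝ)+1+r)^p)
      = (1/d^p)*(1/((m:ℝ)+1+a) - 1/((m:ℝ)+1+r))
        - ∑ j ∈ Finset.Icc 2 p, (1/d^(p-j+1))*(1/((m:ℝ)+1+r)^j) := by
    intro m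
    have hx : (m:ℝ)+1+a ≠ 0 := by positivity
    have hxdr : (m:ℝ)+1+(a:ℝ)+d = (m:ℝ)+1+r := by rw [hd]; ring
    have hxd : (m:ℝ)+1+(a:ℝ)+d ≠ 0 := by rw [hxdr]; positivity
    have hX : ((m:ℝ)+1+r) ≠ 0 := by positivity
    have key := pf_p ((m:ℝ)+1+a) d hx hdne hxd p hp
    rw [hxdr] at key
    rw [key]
    rw [show Finset.Icc 1 p = insert 1 (Finset.Icc 2 p) by ext x; simp; omega,
      Finset.sum_insert (by simp)]
    rw [show p - 1 + 1 = p by omega]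
    have hterm : ∀ j ∈ Finset.Icc 2 p,
        1/(d^(p-j+1)*((m:ℝ)+1+r)^j) = (1/d^(p-j+1))*(1/((m:ℝ)+1+r)^j) := by
      intro j hj
      rw [one_div_mul_one_div]
    rw [Finset.sum_congr rfl hterm]
    have hdp : d^p ≠ 0 := pow_ne_zero _ hdne
    field_simp
    ring
  rw [tsum_congr hpt]
  have SA : Summable (fun m : ℕ => (1/d^p)*(1/((m:ℝ)+1+a) - 1/((m:ℝ)+1+r))) :=
    (summ_telescope a r).mul_left _
  have SBj : ∀ j ∈ Finset.Icc 2 p,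
      Summable (fun m : ℕ => (1/d^(p-j+1))*(1/((m:ℝ)+1+r)^j)) := by
    intro j hj
    simp only [Finset.mem_Icc] at hj
    exact (summ_shift j r hj.1).mul_left _
  have SB : Summable (fun m : ℕ => ∑ j ∈ Finset.Icc 2 p, (1/d^(p-j+1))*(1/((m:ℝ)+1+r)^j)) :=
    summable_sum SBj
  rw [Summable.tsum_sub SA SB, tsum_mul_left, tsum_telescope a r, Summable.tsum_finsetSum SBj]
  have hj2 : ∀ j ∈ Finset.Icc 2 p,
      ∑' m : ℕ, (1/d^(p-j+1))*(1/((m:ℝ)+1+r)^j)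
        = (1/d^(p-j+1))*(zetaVal j - Hgen j r) := by
    intro j hj
    simp only [Finset.mem_Icc] at hj
    rw [tsum_mul_left, tsum_tail j r hj.1]
  rw [Finset.sum_congr rfl hj2]
  have hfin : ∀ j ∈ Finset.Icc 2 p,
      (Hgen j r - zetaVal j)/d^(p-j+1) = -(1/d^(p-j+1)*(zetaVal j - Hgen j r)) := by
    intro j hj; field_simp; ring
  rw [Finset.sum_congr rfl hfin, Finset.sum_neg_distrib]
  ring

lemma finite_part (p r l : ℕ) (hr : 1 ≤ r) :
    ∑ i ∈ Finset.range r,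
      (∑ k ∈ Finset.range (i+1), (Nat.choose r k : ℝ) * (-1:ℝ)^k / (((i+1-k : ℕ)) : ℝ))
        / (((i+1 : ℕ) : ℝ)^p * (Nat.choose (i+1+l) l : ℝ))
    = (∑ n ∈ Finset.Icc 1 r, 1 / ((n:ℝ)^(p+1) * (Nat.choose (n+l) l : ℝ)))
      + ∑ k ∈ Finset.Icc 1 (r-1), ∑ n ∈ Finset.Icc 1 (r-k),
          (Nat.choose r k : ℝ) * (-1:ℝ)^k
            / ((n:ℝ) * ((n+k : ℕ):ℝ)^p * (Nat.choose (n+k+l) l : ℝ)) := by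
  have L1 : ∑ i ∈ Finset.range r,
      (∑ k ∈ Finset.range (i+1), (Nat.choose r k : ℝ) * (-1:ℝ)^k / (((i+1-k : ℕ)) : ℝ))
        / (((i+1 : ℕ) : ℝ)^p * (Nat.choose (i+1+l) l : ℝ))
      = ∑ i ∈ Finset.range r, ∑ k ∈ Finset.range (i+1),
          (Nat.choose r k : ℝ) * (-1:ℝ)^k / (((i+1-k : ℕ)) : ℝ)
            / (((i+1 : ℕ) : ℝ)^p * (Nat.choose (i+1+l) l : ℝ)) :=
    Finset.sum_congr rfl fun i _ => Finset.sum_div _ _ _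
  rw [L1]
  have L2 : ∑ i ∈ Finset.range r, ∑ k ∈ Finset.range (i+1),
          (Nat.choose r k : ℝ) * (-1:ℝ)^k / (((i+1-k : ℕ)) : ℝ)
            / (((i+1 : ℕ) : ℝ)^p * (Nat.choose (i+1+l) l : ℝ))
      = ∑ k ∈ Finset.range r, ∑ n ∈ Finset.Icc 1 (r-k),
          (Nat.choose r k : ℝ) * (-1:ℝ)^k
            / ((n:ℝ) * ((n+k : ℕ):ℝ)^p * (Nat.choose (n+k+l) l : ℝ)) := by
    rw [Finset.sum_sigma' (Finset.range r) (fun i => Finset.range (i+1))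
          (fun i k => (Nat.choose r k : ℝ) * (-1:ℝ)^k / (((i+1-k : ℕ)) : ℝ)
            / (((i+1 : ℕ) : ℝ)^p * (Nat.choose (i+1+l) l : ℝ))),
        Finset.sum_sigma' (Finset.range r) (fun k => Finset.Icc 1 (r-k))
          (fun k n => (Nat.choose r k : ℝ) * (-1:ℝ)^k
            / ((n:ℝ) * ((n+k : ℕ):ℝ)^p * (Nat.choose (n+k+l) l : ℝ)))]
    refine Finset.sum_nbij' (fun x => ⟨x.2, x.1 + 1 - x.2⟩) (fun y => ⟨y.2 + y.1 - 1, y.1⟩)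
      ?_ ?_ ?_ ?_ ?_
    · rintro ⟨i, k⟩ hx
      simp only [Finset.mem_sigma, Finset.mem_range, Finset.mem_Icc] at hx ⊢
      omega
    · rintro ⟨k, n⟩ hy
      simp only [Finset.mem_sigma, Finset.mem_range, Finset.mem_Icc] at hy ⊢
      omega
    · rintro ⟨i, k⟩ hx
      simp only [Finset.mem_sigma, Finset.mem_range] at hx
      simp only [Sigma.mk.inj_iff, heq_iff_eq]
      exact ⟨by omega, trivial⟩
    · rintro ⟨k, n⟩ hy
      simp only [Finset.mem_sigma, Finset.mem_range, Finset.mem_Icc] at hy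
      simp only [Sigma.mk.inj_iff, heq_iff_eq]
      exact ⟨trivial, by omega⟩
    · rintro ⟨i, k⟩ hx
      simp only [Finset.mem_sigma, Finset.mem_range] at hx
      obtain ⟨hi, hk⟩ := hx
      have hk' : k ≤ i := by omega
      have e1 : i + 1 - k + k = i + 1 := by omega
      simp only
      rw [e1, div_div]
      ring
  rw [L2]
  have hins : Finset.range r = insert 0 (Finset.Icc 1 (r-1)) := by
    ext x; simp [Finset.mem_Icc]; omega
  rw [hins, Finset.sum_insert (by simp)]
  have hzero : ∑ n ∈ Finset.Icc 1 (r-0),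
      (Nat.choose r 0 : ℝ) * (-1:ℝ)^0
        / ((n:ℝ) * ((n+0 : ℕ):ℝ)^p * (Nat.choose (n+0+l) l : ℝ))
      = ∑ n ∈ Finset.Icc 1 r, 1 / ((n:ℝ)^(p+1) * (Nat.choose (n+l) l : ℝ)) := by
    apply Finset.sum_congr (by norm_num)
    intro n _
    simp only [Nat.choose_zero_right, Nat.add_zero, pow_zero, Nat.cast_one, one_mul]
    rw [pow_succ']
  rw [hzero]


theorem stmt7 (p r l : ℕ) (hp : 1 ≤ p) (hr : 1 ≤ r) :
    ∑' n : ℕ, hneg r (n + 1) / (((n + 1 : ℕ) : ℝ) ^ p * (Nat.choose (n + 1 + l) l : ℝ)) =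
      zetaVal (p + 1) - Hgen (p + 1) r +
      (∑ n ∈ Finset.Icc 1 r, 1 / ((n : ℝ) ^ (p + 1) * (Nat.choose (n + l) l : ℝ))) +
      (∑ k ∈ Finset.Icc 1 (r - 1), ∑ n ∈ Finset.Icc 1 (r - k),
        (Nat.choose r k : ℝ) * (-1 : ℝ) ^ k /
          ((n : ℝ) * ((n + k : ℕ) : ℝ) ^ p * (Nat.choose (n + k + l) l : ℝ))) +
      (-1 : ℝ) ^ r / (Nat.choose (r + l) l : ℝ) *
        ∑ a ∈ (Finset.range (r + l + 1)).erase r,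
          (Nat.choose (r + l) a : ℝ) * (-1 : ℝ) ^ a *
            ((Hgen 1 r - Hgen 1 a) / ((r : ℝ) - (a : ℝ)) ^ p +
             ∑ j ∈ Finset.Icc 2 p,
               (Hgen j r - zetaVal j) / ((r : ℝ) - (a : ℝ)) ^ (p - j + 1)) := by
  set F : ℕ → ℝ := fun n =>
    hneg r (n + 1) / (((n + 1 : ℕ) : ℝ) ^ p * (Nat.choose (n + 1 + l) l : ℝ)) with hF
  set c : ℝ := (-1 : ℝ) ^ r / (Nat.choose (r + l) l : ℝ) with hc
  -- tail formula
  have htail : ∀ m : ℕ, F (m + r) = (-1:ℝ)^r *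
      (1/(((m:ℝ)+1) * (Nat.choose (m+1+r) r : ℝ) * (Nat.choose (m+1+r+l) l : ℝ))
        * (1/((m:ℝ)+1+r)^p)) := by
    intro m
    simp only [hF]
    rw [hneg, if_pos (show r < m + r + 1 by omega)]
    rw [show m + r + 1 - r = m + 1 by omega, show m + r + 1 = m + 1 + r by omega]
    have n1 : ((m:ℝ)+1) ≠ 0 := by positivity
    have n2 : (Nat.choose (m+1+r) r : ℝ) ≠ 0 := by
      have := Nat.choose_pos (show r ≤ m+1+r by omega); positivity
    have n3 : (Nat.choose (m+1+r+l) l : ℝ) ≠ 0 := by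
      have := Nat.choose_pos (show l ≤ m+1+r+l by omega); positivity
    have n4 : ((m:ℝ)+1+r) ^ p ≠ 0 := by positivity
    push_cast
    field_simp
  -- summability of tail
  have hCb1 : ∀ m : ℕ, (1:ℝ) ≤ (Nat.choose (m+1+r) r : ℝ) := fun m =>
    Nat.one_le_cast.mpr (Nat.choose_pos (by omega))
  have hCb2 : ∀ m : ℕ, (1:ℝ) ≤ (Nat.choose (m+1+r+l) l : ℝ) := fun m =>
    Nat.one_le_cast.mpr (Nat.choose_pos (by omega))
  have hsummtail : Summable (fun m : ℕ => F (m + r)) := by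
    apply Summable.congr (f := fun m : ℕ => (-1:ℝ)^r *
      (1/(((m:ℝ)+1) * (Nat.choose (m+1+r) r : ℝ) * (Nat.choose (m+1+r+l) l : ℝ))
        * (1/((m:ℝ)+1+r)^p)))
    · apply Summable.mul_left
      refine Summable.of_nonneg_of_le (fun m => by positivity) (fun m => ?_) (summ_base 2 le_rfl)
      have hm1 : (0:ℝ) < (m:ℝ)+1 := by positivity
      have hb1 : 1/(((m:ℝ)+1) * (Nat.choose (m+1+r) r : ℝ) * (Nat.choose (m+1+r+l) l : ℝ))
          ≤ 1/((m:ℝ)+1) := by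
        apply one_div_le_one_div_of_le hm1
        calc ((m:ℝ)+1) ≤ ((m:ℝ)+1) * (Nat.choose (m+1+r) r : ℝ) :=
              le_mul_of_one_le_right hm1.le (hCb1 m)
          _ ≤ ((m:ℝ)+1) * (Nat.choose (m+1+r) r : ℝ) * (Nat.choose (m+1+r+l) l : ℝ) := by
              apply le_mul_of_one_le_right _ (hCb2 m)
              have := hCb1 m
              nlinarith
      have hb2 : 1/((m:ℝ)+1+r)^p ≤ 1/((m:ℝ)+1) := by
        apply one_div_le_one_div_of_le hm1
        calc ((m:ℝ)+1) = ((m:ℝ)+1)^1 := (pow_one _).symm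
          _ ≤ ((m:ℝ)+1+r)^1 := by
              rw [pow_one, pow_one]
              have := Nat.cast_nonneg (α := ℝ) r; linarith
          _ ≤ ((m:ℝ)+1+r)^p := pow_le_pow_right₀ (by have := Nat.cast_nonneg (α := ℝ) r; linarith) hp
      calc 1/(((m:ℝ)+1) * (Nat.choose (m+1+r) r : ℝ) * (Nat.choose (m+1+r+l) l : ℝ))
            * (1/((m:ℝ)+1+r)^p)
          ≤ (1/((m:ℝ)+1)) * (1/((m:ℝ)+1)) := by
            apply mul_le_mul hb1 hb2 (by positivity) (by positivity)
        _ = 1/((m:ℝ)+1)^2 := by rw [one_div_mul_one_div, ← pow_two]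
    · exact fun m => (htail m).symm
  have hsumF : Summable F := (summable_nat_add_iff r).1 hsummtail
  have hsplit : ∑' n : ℕ, F n = ∑ i ∈ Finset.range r, F i + ∑' m : ℕ, F (m + r) :=
    (Summable.sum_add_tsum_nat_add r hsumF).symm
  -- finite part
  have hfineq : ∀ i ∈ Finset.range r, F i =
      (∑ k ∈ Finset.range (i+1), (Nat.choose r k : ℝ) * (-1:ℝ)^k / (((i+1-k : ℕ)) : ℝ))
        / (((i+1 : ℕ) : ℝ)^p * (Nat.choose (i+1+l) l : ℝ)) := by
    intro i hi
    simp only [Finset.mem_range] at hi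
    simp only [hF]
    rw [hneg, if_neg (by omega)]
  have hfin : ∑ i ∈ Finset.range r, F i
      = (∑ n ∈ Finset.Icc 1 r, 1 / ((n:ℝ)^(p+1) * (Nat.choose (n+l) l : ℝ)))
        + ∑ k ∈ Finset.Icc 1 (r-1), ∑ n ∈ Finset.Icc 1 (r-k),
            (Nat.choose r k : ℝ) * (-1:ℝ)^k
              / ((n:ℝ) * ((n+k : ℕ):ℝ)^p * (Nat.choose (n+k+l) l : ℝ)) := by
    rw [Finset.sum_congr rfl hfineq, finite_part p r l hr]
  -- tail rewrite as sum over a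
  have htail2 : ∀ m : ℕ, F (m + r) = ∑ a ∈ Finset.range (r+l+1),
      c * ((-1:ℝ)^a * (Nat.choose (r+l) a : ℝ)
        * (1/(((m:ℝ)+1+a)*((m:ℝ)+1+r)^p))) := by
    intro m
    rw [htail m, choose_prod_eq m r l, ← pf_a (r+l) ((m:ℝ)+1) (by positivity)]
    have hstep : ∀ a ∈ Finset.range (r+l+1),
        c * ((-1:ℝ)^a * (Nat.choose (r+l) a : ℝ) * (1/(((m:ℝ)+1+a)*((m:ℝ)+1+r)^p)))
        = ((-1:ℝ)^a * (Nat.choose (r+l) a : ℝ) / (((m:ℝ)+1) + a))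
            * (c * (1/((m:ℝ)+1+r)^p)) := by
      intro a _
      rw [hc, ← one_div_mul_one_div (((m:ℝ)+1+a)) ((((m:ℝ)+1+r))^p)]
      ring
    rw [Finset.sum_congr rfl hstep, ← Finset.sum_mul, hc]
    ring
  have Sa : ∀ a ∈ Finset.range (r+l+1), Summable (fun m : ℕ =>
      c * ((-1:ℝ)^a * (Nat.choose (r+l) a : ℝ)
        * (1/(((m:ℝ)+1+a)*((m:ℝ)+1+r)^p)))) := fun a _ =>
    ((summ_frac a r p hp).mul_left _).mul_left _
  have htailsum : ∑' m : ℕ, F (m + r) = ∑ a ∈ Finset.range (r+l+1),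
      c * ((-1:ℝ)^a * (Nat.choose (r+l) a : ℝ)
        * ∑' m : ℕ, 1/(((m:ℝ)+1+a)*((m:ℝ)+1+r)^p)) := by
    rw [tsum_congr htail2, Summable.tsum_finsetSum Sa]
    exact Finset.sum_congr rfl fun a _ => by rw [tsum_mul_left, tsum_mul_left]
  -- split off a = r
  have hrmem : r ∈ Finset.range (r+l+1) := by simp
  rw [hsplit, hfin, htailsum, ← Finset.add_sum_erase _ _ hrmem]
  -- a = r value
  have hCsym : (Nat.choose (r+l) r : ℝ) = (Nat.choose (r+l) l : ℝ) := by
    norm_cast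
    rw [← Nat.choose_symm (show l ≤ r+l by omega), show r+l-l = r by omega]
  have hCLne : ((Nat.choose (r+l) l : ℝ)) ≠ 0 := by
    have := Nat.choose_pos (show l ≤ r+l by omega)
    positivity
  have har : c * ((-1:ℝ)^r * (Nat.choose (r+l) r : ℝ)
      * ∑' m : ℕ, 1/(((m:ℝ)+1+r)*((m:ℝ)+1+r)^p))
      = zetaVal (p+1) - Hgen (p+1) r := by
    rw [tsum_term_eq p r hp, hCsym, hc]
    have hneg1 : (-1:ℝ)^r * (-1:ℝ)^r = 1 := by
      rw [← pow_add]
      exact Even.neg_one_pow ⟨r, by ring⟩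
    field_simp
    linear_combination (zetaVal (p+1) - Hgen (p+1) r) * hneg1
  rw [har]
  -- erase part
  have herase : ∑ a ∈ (Finset.range (r+l+1)).erase r,
      c * ((-1:ℝ)^a * (Nat.choose (r+l) a : ℝ)
        * ∑' m : ℕ, 1/(((m:ℝ)+1+a)*((m:ℝ)+1+r)^p))
      = c * ∑ a ∈ (Finset.range (r+l+1)).erase r,
          (Nat.choose (r+l) a : ℝ) * (-1:ℝ)^a *
            ((Hgen 1 r - Hgen 1 a) / ((r:ℝ) - (a:ℝ))^p +
             ∑ j ∈ Finset.Icc 2 p, (Hgen j r - zetaVal j) / ((r:ℝ) - (a:ℝ))^(p-j+1)) := by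
    rw [Finset.mul_sum]
    apply Finset.sum_congr rfl
    intro a ha
    have hane : a ≠ r := (Finset.mem_erase.1 ha).1
    rw [tsum_term_ne p r a hp hane]
    ring
  rw [herase]
  ring
end
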